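/- Let f : ℝⁿ → ℝ be locally Lipschitz, A ∈ ℝ^{m×n}, x̄ ∈ ℝⁿ with x̄ ≥ 0, and let 𝒥 = {j : x̄_j = 0}. Suppose the convex compact set ∂_𝒥 f(x̄) (the 𝒥-components of the Clarke subdifferential) is disjoint from the convex set S = {s ∈ ℝ^{|𝒥|} : s ≥ A_𝒥ᵀ y for some y ∈ ℝᵐ}. Then there exists u ∈ ℝ^{|𝒥|} with u ≥ 0, A_𝒥 u = 0, and ⟨u, d⟩ < 0 for every d ∈ ∂_𝒥 f(x̄). -/

import Mathlib

open Matrix Filter Topology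

noncomputable def clarkeSubdiff {n : ℕ} (f : (Fin n → ℝ) → ℝ) (x : Fin n → ℝ) :
    Set (Fin n → ℝ) :=
  convexHull ℝ {v | ∃ u : ℕ → Fin n → ℝ, (∀ k, DifferentiableAt ℝ f (u k)) ∧
    Tendsto u atTop (𝓝 x) ∧
    ∀ w : Fin n → ℝ, Tendsto (fun k => fderiv ℝ f (u k) w) atTop (𝓝 (v ⬝ᵥ w))}


def coneSet {n : ℕ} {ι : Type} [Fintype ι] (v : ι → (Fin n → ℝ)) : Set (Fin n → ℝ) :=
  {x | ∃ c : ι → ℝ, (∀ i, 0 ≤ c i) ∧ ∑ i, c i • v i = x}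

lemma isClosed_coneSet_aux {n : ℕ} : ∀ (N : ℕ) (ι : Type) (_ : Fintype ι), Fintype.card ι = N →
    ∀ (v : ι → (Fin n → ℝ)), IsClosed (coneSet v) := by
  intro N
  induction N using Nat.strong_induction_on with
  | _ N ih =>
    intro ι _ hcard v
    classical
    by_cases hli : LinearIndependent ℝ v
    · let L : (ι → ℝ) →ₗ[ℝ] (Fin n → ℝ) := ∑ i, (LinearMap.proj i).smulRight (v i)
      have hL : ∀ c, L c = ∑ i, c i • v i := by
        intro c
        simp [L, LinearMap.sum_apply]
      have hker : LinearMap.ker L = ⊥ := by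
        rw [LinearMap.ker_eq_bot']
        intro c hc
        funext i
        exact Fintype.linearIndependent_iff.1 hli c (by rw [← hL]; exact hc) i
      have hemb := LinearMap.isClosedEmbedding_of_injective hker
      have himg : coneSet v = L '' {c | ∀ i, 0 ≤ c i} := by
        ext x
        constructor
        · rintro ⟨c, hc, rfl⟩; exact ⟨c, hc, hL c⟩
        · rintro ⟨c, hc, rfl⟩; exact ⟨c, hc, (hL c).symm⟩
      rw [himg]
      have hcl : IsClosed {c : ι → ℝ | ∀ i, 0 ≤ c i} := by
        have : {c : ι → ℝ | ∀ i, 0 ≤ c i} = ⋂ i, (fun c : ι → ℝ => c i) ⁻¹' Set.Ici 0 := by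
          ext c; simp [Set.mem_iInter]
        rw [this]
        exact isClosed_iInter fun i => isClosed_Ici.preimage (continuous_apply i)
      exact hemb.isClosedMap _ hcl
    · obtain ⟨g, hgsum, i₁, hi₁⟩ : ∃ g : ι → ℝ, ∑ i, g i • v i = 0 ∧ ∃ i, g i ≠ 0 := by
        rw [Fintype.linearIndependent_iff] at hli
        push_neg at hli
        obtain ⟨g, h1, h2⟩ := hli
        exact ⟨g, h1, h2⟩
      have hN : 1 ≤ N := by
        rw [← hcard]
        exact Fintype.card_pos_iff.2 ⟨i₁⟩
      -- WLOG some coefficient positive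
      obtain ⟨g', hg'sum, hg'pos⟩ : ∃ g' : ι → ℝ, ∑ i, g' i • v i = 0 ∧ ∃ i, 0 < g' i := by
        by_cases h : ∃ i, 0 < g i
        · exact ⟨g, hgsum, h⟩
        · push_neg at h
          have hneg : ∑ i, (-g) i • v i = 0 := by
            have : ∑ i, (-g) i • v i = -(∑ i, g i • v i) := by
              rw [← Finset.sum_neg_distrib]
              exact Finset.sum_congr rfl fun i _ => by simp [neg_smul]
            rw [this, hgsum, neg_zero]
          refine ⟨-g, hneg, i₁, ?_⟩
          have := lt_of_le_of_ne (h i₁) hi₁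
          simpa using this
      -- the union decomposition
      have hsub : ∀ i₀ : ι, IsClosed (coneSet (fun a : {i : ι // i ≠ i₀} => v a.1)) := by
        intro i₀
        have hc1 : Fintype.card {i : ι // i ≠ i₀} = N - 1 := by
          have h1 : Fintype.card {i : ι // ¬ i = i₀} =
              Fintype.card ι - Fintype.card {i : ι // i = i₀} := Fintype.card_subtype_compl _
          rw [Fintype.card_subtype_eq] at h1
          rw [← hcard]
          exact h1
        exact ih (N - 1) (by omega) _ inferInstance hc1 _
      have hunion : coneSet v = ⋃ i₀ : ι, (coneSet (fun a : {i : ι // i ≠ i₀} => v a.1)) := by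
        ext x
        constructor
        · rintro ⟨c, hc, rfl⟩
          set P : Finset ι := Finset.univ.filter (fun i => 0 < g' i) with hP
          have hPne : P.Nonempty := by
            obtain ⟨i, hi⟩ := hg'pos
            exact ⟨i, by simp [hP, hi]⟩
          obtain ⟨i₀, hi₀P, hi₀min⟩ := P.exists_min_image (fun i => c i / g' i) hPne
          have hg'i₀ : 0 < g' i₀ := by simpa [hP] using hi₀P
          set t : ℝ := c i₀ / g' i₀ with ht
          have ht0 : 0 ≤ t := div_nonneg (hc i₀) hg'i₀.le
          set c'' : ι → ℝ := fun i => c i - t * g' i with hc''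
          have hc''nonneg : ∀ i, 0 ≤ c'' i := by
            intro i
            by_cases hgi : 0 < g' i
            · have : t ≤ c i / g' i := hi₀min i (by simp [hP, hgi])
              have := (le_div_iff₀ hgi).1 this
              simp [hc'']; linarith
            · push_neg at hgi
              have : t * g' i ≤ 0 := mul_nonpos_of_nonneg_of_nonpos ht0 hgi
              have := hc i
              simp [hc'']; linarith
          have hc''i₀ : c'' i₀ = 0 := by
            simp [hc'', ht, div_mul_cancel₀ _ (ne_of_gt hg'i₀)]
          have hsum'' : ∑ i, c'' i • v i = ∑ i, c i • v i := by
            have : ∀ i, c'' i • v i = c i • v i - (t * g' i) • v i := by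
              intro i; rw [hc'']; simp [sub_smul]
            rw [Finset.sum_congr rfl (fun i _ => this i), Finset.sum_sub_distrib]
            have : ∑ i, (t * g' i) • v i = t • ∑ i, g' i • v i := by
              rw [Finset.smul_sum]
              exact Finset.sum_congr rfl fun i _ => by rw [← smul_smul]
            rw [this, hg'sum, smul_zero, sub_zero]
          refine Set.mem_iUnion.2 ⟨i₀, ⟨fun a => c'' a.1, fun a => hc''nonneg a.1, ?_⟩⟩
          have hsplit : ∑ i ∈ Finset.univ.erase i₀, c'' i • v i + c'' i₀ • v i₀ = ∑ i, c'' i • v i :=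
            Finset.sum_erase_add _ _ (Finset.mem_univ i₀)
          have hst : ∑ i ∈ Finset.univ.erase i₀, c'' i • v i
              = ∑ a : {i : ι // i ≠ i₀}, c'' a.1 • v a.1 := by
            exact Finset.sum_subtype (p := fun i => i ≠ i₀) _ (by intro i; simp [Finset.mem_erase]) (fun i => c'' i • v i)
          rw [← hst]
          rw [← hsplit, hc''i₀] at hsum''
          simp only [zero_smul, add_zero] at hsum''
          rw [hsum'']
        · intro hx
          obtain ⟨i₀, c, hc, rfl⟩ := Set.mem_iUnion.1 hx
          set d : ι → ℝ := fun i => if h : i = i₀ then 0 else c ⟨i, h⟩ with hd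
          refine ⟨d, fun i => ?_, ?_⟩
          · by_cases h : i = i₀ <;> simp [hd, h, hc]
          · rw [← Finset.sum_erase_add _ _ (Finset.mem_univ i₀)]
            have hd0 : d i₀ = 0 := by simp [hd]
            rw [hd0, zero_smul, add_zero]
            rw [Finset.sum_subtype (p := fun i => i ≠ i₀) _
              (by intro i; simp [Finset.mem_erase]) (fun i => d i • v i)]
            exact Finset.sum_congr rfl fun a _ => by
              have hda : d a.1 = c a := by simp [hd, a.2]
              rw [hda]
      rw [hunion]
      exact isClosed_iUnion_of_finite hsub

lemma isClosed_coneSet {n : ℕ} {ι : Type} [Fintype ι] (v : ι → (Fin n → ℝ)) :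
    IsClosed (coneSet v) :=
  isClosed_coneSet_aux _ ι inferInstance rfl v

lemma convex_coneSet {n : ℕ} {ι : Type} [Fintype ι] (v : ι → (Fin n → ℝ)) :
    Convex ℝ (coneSet v) := by
  rintro x ⟨c, hc, rfl⟩ y ⟨c', hc', rfl⟩ a b ha hb hab
  refine ⟨fun i => a * c i + b * c' i, fun i => add_nonneg (mul_nonneg ha (hc i)) (mul_nonneg hb (hc' i)), ?_⟩
  rw [Finset.smul_sum, Finset.smul_sum, ← Finset.sum_add_distrib]
  exact Finset.sum_congr rfl fun i _ => by
    rw [add_smul, ← smul_smul, ← smul_smul]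

section SPrime
variable {n m : ℕ} (A : Matrix (Fin m) (Fin n) ℝ) (xbar : Fin n → ℝ)

noncomputable def genFam : ((Fin m ⊕ Fin m) ⊕ (Fin n ⊕ Fin n)) → (Fin n → ℝ)
  | Sum.inl (Sum.inl i) => fun j => A i j
  | Sum.inl (Sum.inr i) => -(fun j => A i j)
  | Sum.inr (Sum.inl j) => Pi.single j 1
  | Sum.inr (Sum.inr j) => if xbar j = 0 then 0 else -(Pi.single j 1)

lemma genFam_sum_apply (c : ((Fin m ⊕ Fin m) ⊕ (Fin n ⊕ Fin n)) → ℝ) (j' : Fin n) :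
    (∑ i, c i • genFam A xbar i) j' =
      (∑ i, (c (Sum.inl (Sum.inl i)) - c (Sum.inl (Sum.inr i))) * A i j')
      + c (Sum.inr (Sum.inl j'))
      + (if xbar j' = 0 then 0 else -(c (Sum.inr (Sum.inr j')))) := by
  classical
  rw [Finset.sum_apply]
  simp only [Pi.smul_apply, smul_eq_mul]
  have h1 : ∑ i : Fin m, c (Sum.inl (Sum.inl i)) * genFam A xbar (Sum.inl (Sum.inl i)) j'
      + ∑ i : Fin m, c (Sum.inl (Sum.inr i)) * genFam A xbar (Sum.inl (Sum.inr i)) j'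
      = ∑ i, (c (Sum.inl (Sum.inl i)) - c (Sum.inl (Sum.inr i))) * A i j' := by
    rw [← Finset.sum_add_distrib]
    exact Finset.sum_congr rfl fun i _ => by
      simp only [genFam, Pi.neg_apply]; ring
  have h2 : ∑ j : Fin n, c (Sum.inr (Sum.inl j)) * genFam A xbar (Sum.inr (Sum.inl j)) j'
      = c (Sum.inr (Sum.inl j')) := by
    have e : ∀ j : Fin n, c (Sum.inr (Sum.inl j)) * (genFam A xbar (Sum.inr (Sum.inl j))) j'
        = if j' = j then c (Sum.inr (Sum.inl j)) else 0 := by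
      intro j
      simp only [genFam, Pi.single_apply]
      by_cases h : j' = j <;> simp [h]
    rw [Finset.sum_congr rfl fun j _ => e j]
    simp
  have h3 : ∑ j : Fin n, c (Sum.inr (Sum.inr j)) * genFam A xbar (Sum.inr (Sum.inr j)) j'
      = if xbar j' = 0 then 0 else -(c (Sum.inr (Sum.inr j'))) := by
    have e : ∀ j : Fin n, c (Sum.inr (Sum.inr j)) * (genFam A xbar (Sum.inr (Sum.inr j))) j'
        = if j' = j then (if xbar j = 0 then 0 else -(c (Sum.inr (Sum.inr j)))) else 0 := by
      intro j
      simp only [genFam]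
      by_cases h : xbar j = 0
      · simp [h]
      · by_cases h2 : j' = j <;> simp [h, h2, Pi.single_apply]
    rw [Finset.sum_congr rfl fun j _ => e j]
    simp
  rw [Fintype.sum_sum_type, Fintype.sum_sum_type, Fintype.sum_sum_type, h1, h2, h3]
  ring

lemma sprime_eq_coneSet :
    {d : Fin n → ℝ | ∃ y : Fin m → ℝ, ∀ j, xbar j = 0 → (Aᵀ *ᵥ y) j ≤ d j}
      = coneSet (genFam A xbar) := by
  classical
  ext d
  constructor
  · rintro ⟨y, hy⟩
    refine ⟨fun i => match i with
      | Sum.inl (Sum.inl i) => max (y i) 0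
      | Sum.inl (Sum.inr i) => max (-y i) 0
      | Sum.inr (Sum.inl j) => if xbar j = 0 then d j - (Aᵀ *ᵥ y) j else max (d j - (Aᵀ *ᵥ y) j) 0
      | Sum.inr (Sum.inr j) => if xbar j = 0 then 0 else max ((Aᵀ *ᵥ y) j - d j) 0, ?_, ?_⟩
    · rintro ((i|i)|(j|j)) <;> dsimp only
      · exact le_max_right _ _
      · exact le_max_right _ _
      · by_cases h : xbar j = 0
        · simp only [if_pos h]
          have := hy j h
          linarith
        · simp only [if_neg h]
          exact le_max_right _ _
      · by_cases h : xbar j = 0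
        · simp [h]
        · simp only [if_neg h]
          exact le_max_right _ _
    · funext j'
      rw [genFam_sum_apply]
      dsimp only
      have hy' : ∀ i : Fin m, (max (y i) 0 - max (-y i) 0) * A i j' = y i * A i j' := by
        intro i
        rcases le_total (y i) 0 with h|h
        · rw [max_eq_right h, max_eq_left (by linarith : (0:ℝ) ≤ -y i)]; ring
        · rw [max_eq_left h, max_eq_right (by linarith : -y i ≤ (0:ℝ))]; ring
      rw [Finset.sum_congr rfl fun i _ => hy' i]
      have hAy : ∑ i, y i * A i j' = (Aᵀ *ᵥ y) j' := by
        simp [Matrix.mulVec, dotProduct, Matrix.transpose_apply, mul_comm]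
      rw [hAy]
      by_cases h : xbar j' = 0
      · simp only [if_pos h]
        ring
      · simp only [if_neg h]
        rcases le_total (d j' - (Aᵀ *ᵥ y) j') 0 with h2|h2
        · rw [max_eq_right h2, max_eq_left (by linarith : (0:ℝ) ≤ (Aᵀ *ᵥ y) j' - d j')]
          ring
        · rw [max_eq_left h2, max_eq_right (by linarith : (Aᵀ *ᵥ y) j' - d j' ≤ (0:ℝ))]
          ring
  · rintro ⟨c, hc, rfl⟩
    refine ⟨fun i => c (Sum.inl (Sum.inl i)) - c (Sum.inl (Sum.inr i)), fun j' hj' => ?_⟩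
    rw [genFam_sum_apply, if_pos hj']
    have hAy : (Aᵀ *ᵥ fun i => c (Sum.inl (Sum.inl i)) - c (Sum.inl (Sum.inr i))) j'
        = ∑ i, (c (Sum.inl (Sum.inl i)) - c (Sum.inl (Sum.inr i))) * A i j' := by
      simp [Matrix.mulVec, dotProduct, Matrix.transpose_apply, mul_comm]
    rw [hAy]
    have := hc (Sum.inr (Sum.inl j'))
    linarith

end SPrime

lemma pad_sum {M : Type*} [AddCommMonoid M] {k N : ℕ} (hkN : k ≤ N) (G : Fin k → M) :
    ∑ i : Fin N, (if h : (i : ℕ) < k then G ⟨i, h⟩ else 0) = ∑ j : Fin k, G j := by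
  set F : ℕ → M := fun j => if h : j < k then G ⟨j, h⟩ else 0 with hF
  have h1 : ∑ i : Fin N, (if h : (i : ℕ) < k then G ⟨i, h⟩ else 0)
      = ∑ j ∈ Finset.range N, F j := by
    rw [← Fin.sum_univ_eq_sum_range]
  have h2 : ∑ j ∈ Finset.range k, F j = ∑ j ∈ Finset.range N, F j :=
    Finset.sum_subset (Finset.range_subset_range.2 hkN) (fun x _ hx => by
      simp only [hF]; exact dif_neg (by simpa using hx))
  have h3 : ∑ j ∈ Finset.range k, F j = ∑ j : Fin k, G j := by
    rw [← Fin.sum_univ_eq_sum_range]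
    exact Finset.sum_congr rfl fun j _ => by simp [hF]
  rw [h1, ← h2, h3]

lemma isCompact_convexHull_of_isCompact {n : ℕ} {s : Set (Fin n → ℝ)} (hs : IsCompact s) :
    IsCompact (convexHull ℝ s) := by
  classical
  rcases s.eq_empty_or_nonempty with rfl | ⟨p₀, hp₀⟩
  · simp
  set N := n + 1 with hN
  set T : Set ((Fin N → ℝ) × (Fin N → Fin n → ℝ)) :=
    stdSimplex ℝ (Fin N) ×ˢ Set.univ.pi fun _ => s with hTdef
  have hT : IsCompact T := (isCompact_stdSimplex (𝕜 := ℝ) (ι := Fin N)).prod (isCompact_univ_pi fun _ => hs)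
  set μ : (Fin N → ℝ) × (Fin N → Fin n → ℝ) → (Fin n → ℝ) := fun p => ∑ i, p.1 i • p.2 i
    with hμdef
  have hμ : Continuous μ := by
    apply continuous_finset_sum
    intro i _
    exact ((continuous_apply i).comp continuous_fst).smul
      ((continuous_apply i).comp continuous_snd)
  have himg : convexHull ℝ s = μ '' T := by
    apply Set.Subset.antisymm
    · intro x hx
      rw [convexHull_eq_union] at hx
      simp only [Set.mem_iUnion] at hx
      obtain ⟨t, hts, hai, hxt⟩ := hx
      have hcard : t.card ≤ N := by
        have h1 := hai.card_le_finrank_succ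
        have h2 : Module.finrank ℝ ↥(vectorSpan ℝ (Set.range (Subtype.val : ↥t → Fin n → ℝ)))
            ≤ Module.finrank ℝ (Fin n → ℝ) := Submodule.finrank_le _
        rw [Module.finrank_fin_fun] at h2
        rw [Fintype.card_coe] at h1
        omega
      rw [Finset.convexHull_eq] at hxt
      obtain ⟨w, hw0, hw1, hwx⟩ := hxt
      set k := t.card with hk
      let e : Fin t.card ≃ {x // x ∈ t} := (Fintype.equivFinOfCardEq (Fintype.card_coe t)).symm
      set wfun : Fin N → ℝ := fun i => if h : (i : ℕ) < k then w (e ⟨i, h⟩) else 0 with hwfun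
      set zfun : Fin N → Fin n → ℝ :=
        fun i => if h : (i : ℕ) < k then (e ⟨i, h⟩ : Fin n → ℝ) else p₀ with hzfun
      have hsum_w : ∑ i : Fin N, wfun i = 1 := by
        have h0 : ∑ i : Fin N, wfun i = ∑ j : Fin k, w (e j) :=
          pad_sum hcard (fun j => w (e j))
        rw [h0]
        have : ∑ j : Fin k, w (e j) = ∑ y ∈ t, w y := by
          rw [← Finset.sum_coe_sort t w]
          exact Equiv.sum_comp e (fun y => w y.1)
        rw [this]; exact hw1
      have hsum_z : ∑ i : Fin N, wfun i • zfun i = x := by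
        have he : ∀ i : Fin N, wfun i • zfun i
            = if h : (i : ℕ) < k then w (e ⟨i, h⟩) • (e ⟨i, h⟩ : Fin n → ℝ) else 0 := by
          intro i
          by_cases h : (i : ℕ) < k <;> simp [hwfun, hzfun, h]
        rw [Finset.sum_congr rfl fun i _ => he i]
        have h0 : (∑ i : Fin N, if h : (i : ℕ) < k then w (e ⟨i, h⟩) • ((e ⟨i, h⟩ : ↥t) : Fin n → ℝ) else 0)
            = ∑ j : Fin k, w (e j) • ((e j : ↥t) : Fin n → ℝ) :=
          pad_sum hcard (fun j => w (e j) • ((e j : ↥t) : Fin n → ℝ))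
        rw [h0]
        have : ∑ j : Fin k, w (e j) • (e j : Fin n → ℝ) = ∑ y ∈ t, w y • y := by
          rw [← Finset.sum_coe_sort t (fun y => w y • y)]
          exact Equiv.sum_comp e (fun y : ↥t => w y.1 • y.1)
        rw [this]
        rw [← hwx, Finset.centerMass_eq_of_sum_1 _ _ hw1]
        simp
      refine ⟨(wfun, zfun), ⟨⟨?_, ?_⟩, ?_⟩, hsum_z⟩
      · intro i
        by_cases h : (i : ℕ) < k
        · simp only [hwfun, dif_pos h]
          exact hw0 _ (e ⟨i, h⟩).2
        · simp [hwfun, dif_neg h]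
      · exact hsum_w
      · intro i _
        by_cases h : (i : ℕ) < k
        · simp only [hzfun, dif_pos h]
          exact hts (e ⟨i, h⟩).2
        · simp only [hzfun, dif_neg h]
          exact hp₀
    · rintro x ⟨⟨w, z⟩, ⟨hw, hz⟩, rfl⟩
      exact (convex_convexHull ℝ s).sum_mem (fun i _ => hw.1 i) hw.2
        (fun i _ => subset_convexHull ℝ s (hz i (Set.mem_univ i)))
  rw [himg]
  exact hT.image hμ

section Clarke
variable {n : ℕ} (f : (Fin n → ℝ) → ℝ) (xbar : Fin n → ℝ)

def clarkeBase : Set (Fin n → ℝ) :=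
  {v | ∃ u : ℕ → Fin n → ℝ, (∀ k, DifferentiableAt ℝ f (u k)) ∧
    Tendsto u atTop (𝓝 xbar) ∧
    ∀ w : Fin n → ℝ, Tendsto (fun k => fderiv ℝ f (u k) w) atTop (𝓝 (v ⬝ᵥ w))}

noncomputable def gradMap (x : Fin n → ℝ) : Fin n → ℝ :=
  fun j => fderiv ℝ f x (Pi.single j 1 : Fin n → ℝ)

lemma fderiv_eq_sum (x w : Fin n → ℝ) :
    fderiv ℝ f x w = ∑ j, w j * gradMap f x j := by
  have hw : w = ∑ j, w j • (Pi.single j 1 : Fin n → ℝ) := by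
    have h1 : ∀ j, w j • (Pi.single j 1 : Fin n → ℝ) = Pi.single j (w j) := by
      intro j
      rw [← Pi.single_smul, smul_eq_mul, mul_one]
    rw [Finset.sum_congr rfl fun j _ => h1 j, Finset.univ_sum_single]
  conv_lhs => rw [hw]
  rw [map_sum]
  exact Finset.sum_congr rfl fun j _ => by
    rw [_root_.map_smul, smul_eq_mul]; rfl

lemma tendsto_iff_gradMap (u : ℕ → Fin n → ℝ) (v : Fin n → ℝ) :
    (∀ w : Fin n → ℝ, Tendsto (fun k => fderiv ℝ f (u k) w) atTop (𝓝 (v ⬝ᵥ w)))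
      ↔ Tendsto (fun k => gradMap f (u k)) atTop (𝓝 v) := by
  constructor
  · intro h
    rw [tendsto_pi_nhds]
    intro j
    have := h (Pi.single j 1 : Fin n → ℝ)
    have hdv : v ⬝ᵥ (Pi.single j 1 : Fin n → ℝ) = v j := by
      simp [dotProduct, Pi.single_apply, mul_comm]
    rw [hdv] at this
    exact this
  · intro h w
    have hv : v ⬝ᵥ w = ∑ j, w j * v j := by
      simp [dotProduct, mul_comm]
    have he : (fun k => fderiv ℝ f (u k) w) = fun k => ∑ j, w j * gradMap f (u k) j := by
      funext k; exact fderiv_eq_sum f (u k) w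
    rw [he, hv]
    exact tendsto_finset_sum _ fun j _ =>
      tendsto_const_nhds.mul ((tendsto_pi_nhds.1 h) j)

lemma clarkeBase_eq_iInter :
    clarkeBase f xbar = ⋂ i : ℕ, closure
      (gradMap f '' ({x | DifferentiableAt ℝ f x} ∩ Metric.ball xbar (1 / (i + 1)))) := by
  ext v
  constructor
  · rintro ⟨u, hdiff, hu, hlim⟩
    rw [Set.mem_iInter]
    intro i
    have hpos : (0 : ℝ) < 1 / (i + 1) := by positivity
    refine mem_closure_of_tendsto ((tendsto_iff_gradMap f u v).1 hlim) ?_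
    filter_upwards [hu (Metric.ball_mem_nhds xbar hpos)] with k hk
    exact ⟨u k, ⟨hdiff k, hk⟩, rfl⟩
  · intro hv
    rw [Set.mem_iInter] at hv
    have hch : ∀ i : ℕ, ∃ x, (DifferentiableAt ℝ f x ∧ x ∈ Metric.ball xbar (1 / (i + 1)))
        ∧ dist v (gradMap f x) < 1 / (i + 1) := by
      intro i
      have hpos : (0 : ℝ) < 1 / (i + 1) := by positivity
      obtain ⟨b, hb, hdist⟩ := Metric.mem_closure_iff.1 (hv i) _ hpos
      obtain ⟨x, hx, rfl⟩ := hb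
      exact ⟨x, hx, hdist⟩
    choose u hu hdist using hch
    have htend0 : Tendsto (fun i : ℕ => (1 : ℝ) / (i + 1)) atTop (𝓝 0) :=
      tendsto_one_div_add_atTop_nhds_zero_nat
    refine ⟨u, fun k => (hu k).1, ?_, (tendsto_iff_gradMap f u v).2 ?_⟩
    · rw [tendsto_iff_dist_tendsto_zero]
      exact squeeze_zero (fun i => dist_nonneg)
        (fun i => le_of_lt (Metric.mem_ball.1 (hu i).2)) htend0
    · rw [tendsto_iff_dist_tendsto_zero]
      refine squeeze_zero (fun i => dist_nonneg) (fun i => le_of_lt ?_) htend0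
      rw [dist_comm]
      exact hdist i

lemma isCompact_clarkeSubdiff' (hf : LocallyLipschitz f) :
    IsCompact (convexHull ℝ (clarkeBase f xbar)) := by
  obtain ⟨K, t, ht, hlip⟩ := hf xbar
  obtain ⟨ε, hε, hball⟩ := Metric.mem_nhds_iff.1 ht
  obtain ⟨i₀, hi₀⟩ := exists_nat_one_div_lt hε
  have hbound : ∀ x ∈ {x | DifferentiableAt ℝ f x} ∩ Metric.ball xbar (1 / (i₀ + 1)),
      gradMap f x ∈ Metric.closedBall 0 K := by
    rintro x ⟨-, hxball⟩
    have hxball' : x ∈ Metric.ball xbar ε := Metric.ball_subset_ball hi₀.le hxball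
    have htx : t ∈ 𝓝 x := Filter.mem_of_superset (Metric.isOpen_ball.mem_nhds hxball') hball
    have hfd : ‖fderiv ℝ f x‖ ≤ K := norm_fderiv_le_of_lipschitzOn ℝ htx hlip
    rw [Metric.mem_closedBall, dist_zero_right]
    refine (pi_norm_le_iff_of_nonneg K.coe_nonneg).2 fun j => ?_
    have h1 : ‖(Pi.single j 1 : Fin n → ℝ)‖ ≤ 1 := by
      refine (pi_norm_le_iff_of_nonneg zero_le_one).2 fun i => ?_
      rcases eq_or_ne i j with rfl | hij
      · simp
      · simp [Pi.single_apply, hij]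
    calc ‖gradMap f x j‖ ≤ ‖fderiv ℝ f x‖ * ‖(Pi.single j 1 : Fin n → ℝ)‖ :=
          (fderiv ℝ f x).le_opNorm _
      _ ≤ K * 1 := mul_le_mul hfd h1 (norm_nonneg _) K.coe_nonneg
      _ = K := mul_one _
  have hGsub : clarkeBase f xbar ⊆ Metric.closedBall 0 K := by
    rw [clarkeBase_eq_iInter]
    refine (Set.iInter_subset _ i₀).trans ?_
    refine closure_minimal ?_ Metric.isClosed_closedBall
    rintro b ⟨x, hx, rfl⟩
    exact hbound x hx
  have hGclosed : IsClosed (clarkeBase f xbar) := by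
    rw [clarkeBase_eq_iInter]
    exact isClosed_iInter fun i => isClosed_closure
  have hGcompact : IsCompact (clarkeBase f xbar) :=
    Metric.isCompact_of_isClosed_isBounded hGclosed (Metric.isBounded_closedBall.subset hGsub)
  exact isCompact_convexHull_of_isCompact hGcompact

end Clarke
lemma phi_eq_sum {n : ℕ} (φ : (Fin n → ℝ) →L[ℝ] ℝ) (d : Fin n → ℝ) :
    φ d = ∑ j, d j * φ (Pi.single j 1 : Fin n → ℝ) := by
  have hw : d = ∑ j, d j • (Pi.single j 1 : Fin n → ℝ) := by
    have h1 : ∀ j, d j • (Pi.single j 1 : Fin n → ℝ) = Pi.single j (d j) := by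
      intro j
      rw [← Pi.single_smul, smul_eq_mul, mul_one]
    rw [Finset.sum_congr rfl fun j _ => h1 j, Finset.univ_sum_single]
  conv_lhs => rw [hw]
  rw [map_sum]
  exact Finset.sum_congr rfl fun j _ => by rw [_root_.map_smul, smul_eq_mul]

theorem stmt6 {n m : ℕ} (f : (Fin n → ℝ) → ℝ) (hf : LocallyLipschitz f)
    (A : Matrix (Fin m) (Fin n) ℝ) (xbar : Fin n → ℝ) (hx : ∀ j, 0 ≤ xbar j)
    (hdisj : ¬ ∃ d ∈ clarkeSubdiff f xbar, ∃ y : Fin m → ℝ,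
      ∀ j, xbar j = 0 → (Aᵀ *ᵥ y) j ≤ d j) :
    ∃ u : Fin n → ℝ, (∀ j, 0 ≤ u j) ∧ (∀ j, xbar j ≠ 0 → u j = 0) ∧
      A *ᵥ u = 0 ∧ ∀ d ∈ clarkeSubdiff f xbar, ∑ j, u j * d j < 0 := by
  classical
  set S : Set (Fin n → ℝ) := {d | ∃ y : Fin m → ℝ, ∀ j, xbar j = 0 → (Aᵀ *ᵥ y) j ≤ d j}
    with hSdef
  have hSeq : S = coneSet (genFam A xbar) := sprime_eq_coneSet A xbar
  have hSclosed : IsClosed S := hSeq ▸ isClosed_coneSet _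
  have hSconvex : Convex ℝ S := hSeq ▸ convex_coneSet _
  have hKeq : clarkeSubdiff f xbar = convexHull ℝ (clarkeBase f xbar) := rfl
  have hKcompact : IsCompact (clarkeSubdiff f xbar) := by
    rw [hKeq]
    exact isCompact_clarkeSubdiff' f xbar hf
  have hKconvex : Convex ℝ (clarkeSubdiff f xbar) := convex_convexHull ℝ _
  have hdisj2 : Disjoint (clarkeSubdiff f xbar) S := by
    rw [Set.disjoint_left]
    intro d hd hdS
    exact hdisj ⟨d, hd, hdS⟩
  obtain ⟨φ, a, b, hφK, hab, hφS⟩ :=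
    geometric_hahn_banach_compact_closed hKconvex hKcompact hSconvex hSclosed hdisj2
  have hS0 : (0 : Fin n → ℝ) ∈ S := ⟨0, fun j hj => by simp [Matrix.mulVec_zero]⟩
  have hb0 : b < 0 := by simpa using hφS 0 hS0
  have hSnonneg : ∀ s ∈ S, 0 ≤ φ s := by
    intro s hs
    by_contra hcon
    push_neg at hcon
    have hscale : ∀ t : ℝ, 0 ≤ t → t • s ∈ S := by
      intro t ht
      obtain ⟨y, hy⟩ := hs
      refine ⟨t • y, fun j hj => ?_⟩
      have h1 := mul_le_mul_of_nonneg_left (hy j hj) ht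
      simpa [Matrix.mulVec_smul, smul_eq_mul] using h1
    have hdiv : 0 ≤ b / φ s := by
      rw [div_nonneg_iff]
      exact Or.inr ⟨hb0.le, hcon.le⟩
    have hmem := hφS _ (hscale (b / φ s) hdiv)
    rw [φ.map_smul, smul_eq_mul, div_mul_cancel₀ _ (ne_of_lt hcon)] at hmem
    exact lt_irrefl b hmem
  set u : Fin n → ℝ := fun j => φ (Pi.single j 1 : Fin n → ℝ) with hu
  have hsingle_mem : ∀ j, xbar j = 0 → (Pi.single j 1 : Fin n → ℝ) ∈ S := by
    intro j hj
    refine ⟨0, fun j' hj' => ?_⟩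
    rw [Matrix.mulVec_zero]
    rcases eq_or_ne j' j with rfl | hne
    · simp
    · simp [Pi.single_apply, hne]
  have hsingle_mem' : ∀ j, xbar j ≠ 0 → (Pi.single j 1 : Fin n → ℝ) ∈ S
      ∧ (-(Pi.single j 1 : Fin n → ℝ)) ∈ S := by
    intro j hj
    constructor
    · refine ⟨0, fun j' hj' => ?_⟩
      rw [Matrix.mulVec_zero]
      rcases eq_or_ne j' j with rfl | hne
      · simp
      · simp [Pi.single_apply, hne]
    · refine ⟨0, fun j' hj' => ?_⟩
      rw [Matrix.mulVec_zero]
      rcases eq_or_ne j' j with rfl | hne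
      · exact absurd hj' hj
      · simp [Pi.single_apply, hne]
  have hzero : ∀ j, xbar j ≠ 0 → u j = 0 := by
    intro j hj
    obtain ⟨h1, h2⟩ := hsingle_mem' j hj
    have ha1 := hSnonneg _ h1
    have ha2 := hSnonneg _ h2
    rw [map_neg] at ha2
    simp only [hu]
    linarith
  have hnonneg : ∀ j, 0 ≤ u j := by
    intro j
    rcases eq_or_ne (xbar j) 0 with hj | hj
    · exact hSnonneg _ (hsingle_mem j hj)
    · exact (hzero j hj).ge
  have hrow_mem : ∀ i : Fin m, ((fun j => A i j) : Fin n → ℝ) ∈ S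
      ∧ (-(fun j => A i j) : Fin n → ℝ) ∈ S := by
    intro i
    have hAv : ∀ j, (Aᵀ *ᵥ (Pi.single i 1 : Fin m → ℝ)) j = A i j := by
      intro j
      simp [Matrix.mulVec, dotProduct, Pi.single_apply, mul_comm]
    constructor
    · exact ⟨Pi.single i 1, fun j hj => (hAv j).le⟩
    · refine ⟨-(Pi.single i 1 : Fin m → ℝ), fun j hj => ?_⟩
      simp only [Matrix.mulVec_neg, Pi.neg_apply, hAv j, le_refl]
  have hAu : A *ᵥ u = 0 := by
    funext i
    obtain ⟨h1, h2⟩ := hrow_mem i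
    have ha1 := hSnonneg _ h1
    have ha2 := hSnonneg _ h2
    rw [map_neg] at ha2
    have hφr : φ (fun j => A i j) = ∑ j, A i j * u j := phi_eq_sum φ _
    have hval : (A *ᵥ u) i = φ (fun j => A i j) := by
      rw [hφr]
      simp [Matrix.mulVec, dotProduct]
    rw [Pi.zero_apply, hval]
    linarith
  refine ⟨u, hnonneg, hzero, hAu, fun d hd => ?_⟩
  have hφd : φ d = ∑ j, u j * d j := by
    rw [phi_eq_sum φ d]
    exact Finset.sum_congr rfl fun j _ => mul_comm _ _
  rw [← hφd]
  have := hφK d hd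
  linarith
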